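/- Let K be a field of characteristic zero, m ≤ n, 1 ≤ k ≤ m, and b ≥ 1. Let g ∈ K[x₁,…,xₙ] satisfy g ∈ ⟨x₁,…,x_m⟩^b and ord₀(g) = b (order exactly b at the origin). Let g' ∈ K[x₁,…,xₙ] be the controlled transform in chart k, i.e. the polynomial with x_k^b·g' = φ_k(g). Then for every point q ∈ Kⁿ lying on the exceptional divisor over the origin, i.e. with q_k = 0 and q_j = 0 for all j > m, one has ord_q(g') ≤ b. (The maxorder does not increase under blowup of a center at whose points the order equals the maxorder; this is the key inequality o' ≤ o in the paper's Lemma on transforms of tight gallimaufries.) -/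

import Mathlib

/-- The maximal ideal `m_p` of polynomials vanishing at the point `p ∈ Kⁿ`. -/
noncomputable def vanishingIdeal {K : Type*} [Field K] {n : ℕ} (p : Fin n → K) :
    Ideal (MvPolynomial (Fin n) K) :=
  RingHom.ker (MvPolynomial.eval p)

/-- The ideal `⟨x₁,…,x_m⟩` of the blowup center `V(x₁,…,x_m)` (indices `0,…,m-1`
in the 0-based indexing of `Fin n`). -/
noncomputable def centerIdeal (K : Type*) [Field K] (n m : ℕ) :
    Ideal (MvPolynomial (Fin n) K) :=
  Ideal.span {f | ∃ i : Fin n, i.val < m ∧ f = MvPolynomial.X i}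

/-- The `k`-th affine chart `φ_k` of the blowup of `𝔸ⁿ` along `V(x₁,…,x_m)`:
the `K`-algebra map sending `xᵢ ↦ x_k·xᵢ` for `i < m`, `i ≠ k`, and fixing the
other variables. -/
noncomputable def blowupChart {K : Type*} [Field K] {n : ℕ} (m : ℕ) (k : Fin n) :
    MvPolynomial (Fin n) K →ₐ[K] MvPolynomial (Fin n) K :=
  MvPolynomial.aeval (fun i : Fin n =>
    if i.val < m ∧ i ≠ k then MvPolynomial.X k * MvPolynomial.X i else MvPolynomial.X i)

namespace Stmt13

open MvPolynomial

variable {K : Type*} [Field K] {n : ℕ}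

/-- The ideal of polynomials all of whose monomials have `w`-weighted degree `≥ c`. -/
noncomputable def sIdeal (K : Type*) [Field K] (n : ℕ) (w : Fin n → ℕ) (c : ℕ) :
    Ideal (MvPolynomial (Fin n) K) where
  carrier := {f | ∀ α ∈ f.support, c ≤ α.sum fun i e => w i * e}
  zero_mem' := by simp
  add_mem' := by
    intro f g hf hg α hα
    rcases Finset.mem_union.1 (MvPolynomial.support_add hα) with h | h
    · exact hf α h
    · exact hg α h
  smul_mem' := by
    intro p f hf α hα
    rw [smul_eq_mul] at hα
    rcases Finset.mem_add.1 (MvPolynomial.support_mul p f hα) with ⟨β, _, γ, hγ, rfl⟩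
    rw [Finsupp.sum_add_index' (fun i => mul_zero _) (fun i b₁ b₂ => mul_add _ _ _)]
    exact le_add_of_nonneg_of_le (Nat.zero_le _) (hf γ hγ)

theorem sIdeal_mul_le (w : Fin n → ℕ) (a c : ℕ) :
    sIdeal K n w a * sIdeal K n w c ≤ sIdeal K n w (a + c) := by
  rw [Ideal.mul_le]
  intro f hf g hg α hα
  rcases Finset.mem_add.1 (MvPolynomial.support_mul f g hα) with ⟨β, hβ, γ, hγ, rfl⟩
  rw [Finsupp.sum_add_index' (fun i => mul_zero _) (fun i b₁ b₂ => mul_add _ _ _)]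
  exact add_le_add (hf β hβ) (hg γ hγ)

theorem pow_le_sIdeal {w : Fin n → ℕ} {I : Ideal (MvPolynomial (Fin n) K)}
    (h : I ≤ sIdeal K n w 1) (c : ℕ) : I ^ c ≤ sIdeal K n w c := by
  induction c with
  | zero => exact fun f _ α _ => Nat.zero_le _
  | succ c ih =>
    rw [pow_succ]
    exact le_trans (Ideal.mul_mono ih h) (sIdeal_mul_le w c 1)

theorem vanishing_zero_le :
    _root_.vanishingIdeal (0 : Fin n → K) ≤ sIdeal K n (fun _ => 1) 1 := by
  intro f hf α hα
  have h0 : MvPolynomial.coeff 0 f = 0 := by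
    rw [_root_.vanishingIdeal, RingHom.mem_ker, MvPolynomial.eval_zero, constantCoeff_eq] at hf
    exact hf
  have hne : α ≠ 0 := by
    rintro rfl
    exact (MvPolynomial.mem_support_iff.1 hα) h0
  obtain ⟨i, hi⟩ := Finsupp.support_nonempty_iff.2 hne
  calc 1 ≤ 1 * α i := by
        have := Finsupp.mem_support_iff.1 hi
        omega
    _ ≤ α.sum fun _ e => 1 * e := by
        rw [Finsupp.sum]
        exact Finset.single_le_sum (f := fun j => 1 * α j) (fun j _ => Nat.zero_le _) hi

theorem centerIdeal_le {m : ℕ} :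
    centerIdeal K n m ≤ sIdeal K n (fun i => if i.val < m then 1 else 0) 1 := by
  rw [centerIdeal, Ideal.span_le]
  rintro f ⟨i, him, rfl⟩ α hα
  rw [MvPolynomial.support_X] at hα
  rw [Finset.mem_singleton] at hα
  subst hα
  rw [Finsupp.sum_single_index]
  · simp [him]
  · exact mul_zero _

theorem prod_X_mem_pow (α : Fin n →₀ ℕ) :
    (α.prod fun i e => (MvPolynomial.X i : MvPolynomial (Fin n) K) ^ e)
      ∈ (_root_.vanishingIdeal (0 : Fin n → K)) ^ (α.sum fun _ e => e) := by
  induction α using Finsupp.induction with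
  | zero => simp [Ideal.one_eq_top]
  | single_add i e β hi he ih =>
    rw [Finsupp.prod_add_index' (fun j => pow_zero _) (fun j b₁ b₂ => pow_add _ _ _),
      Finsupp.sum_add_index' (fun j => rfl) (fun j b₁ b₂ => rfl),
      Finsupp.prod_single_index, Finsupp.sum_single_index, pow_add]
    · refine Ideal.mul_mem_mul (Ideal.pow_mem_pow ?_ e) ih
      rw [_root_.vanishingIdeal, RingHom.mem_ker, MvPolynomial.eval_X]
      rfl
    · rfl
    · exact pow_zero _

theorem mem_vanishing_pow {f : MvPolynomial (Fin n) K} {j : ℕ}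
    (h : ∀ α ∈ f.support, j ≤ α.sum fun _ e => e) :
    f ∈ (_root_.vanishingIdeal (0 : Fin n → K)) ^ j := by
  rw [MvPolynomial.as_sum f]
  refine Ideal.sum_mem _ fun α hα => ?_
  rw [MvPolynomial.monomial_eq]
  exact Ideal.pow_le_pow_right (h α hα)
    (Ideal.mul_mem_left _ _ (prod_X_mem_pow α))

theorem homogeneousComponent_monomial' (c : ℕ) (α : Fin n →₀ ℕ) (a : K) :
    homogeneousComponent c (monomial α a)
      = if (α.sum fun _ e => e) = c then monomial α a else 0 := by
  ext β
  rw [coeff_homogeneousComponent, apply_ite (coeff β), coeff_zero, coeff_monomial]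
  by_cases hβ : α = β
  · subst hβ
    have hd : Finsupp.degree α = α.sum fun _ e => e := rfl
    rw [hd]
  · simp [coeff_monomial, hβ]

theorem coeff_aeval_C_mul_X (u : Fin n → MvPolynomial (Fin n) K)
    (f : MvPolynomial (Fin n) K) (c : ℕ) :
    (MvPolynomial.aeval (fun i => Polynomial.C (u i) * Polynomial.X) f).coeff c
      = MvPolynomial.aeval u (homogeneousComponent c f) := by
  conv_lhs => rw [MvPolynomial.as_sum f]
  conv_rhs => rw [MvPolynomial.as_sum f]
  rw [map_sum, Polynomial.finset_sum_coeff, map_sum, map_sum]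
  refine Finset.sum_congr rfl fun α hα => ?_
  rw [aeval_monomial, homogeneousComponent_monomial']
  have hprod : (α.prod fun i e => (Polynomial.C (u i) * Polynomial.X) ^ e)
      = Polynomial.C (α.prod fun i e => u i ^ e)
        * Polynomial.X ^ (α.sum fun _ e => e) := by
    rw [Finsupp.prod, Finsupp.prod, Finsupp.sum]
    simp_rw [mul_pow, ← Polynomial.C_pow]
    rw [Finset.prod_mul_distrib, ← map_prod, Finset.prod_pow_eq_pow_sum]
  rw [hprod, Polynomial.algebraMap_apply, ← mul_assoc, ← Polynomial.C_mul,
    Polynomial.coeff_C_mul, Polynomial.coeff_X_pow]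
  by_cases hc : (α.sum fun _ e => e) = c
  · rw [if_pos hc.symm, mul_one, if_pos hc, aeval_monomial]
  · rw [if_neg (fun h => hc h.symm), mul_zero, if_neg hc, map_zero]

theorem aeval_factor (u u' : Fin n → MvPolynomial (Fin n) K)
    (z : MvPolynomial (Fin n) K) (b : ℕ) (F : MvPolynomial (Fin n) K)
    (hu : ∀ α ∈ F.support, ∀ i ∈ α.support, u i = u' i * z)
    (hdeg : ∀ α ∈ F.support, (α.sum fun _ e => e) = b) :
    MvPolynomial.aeval u F = z ^ b * MvPolynomial.aeval u' F := by
  conv_lhs => rw [MvPolynomial.as_sum F]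
  conv_rhs => rw [MvPolynomial.as_sum F]
  rw [map_sum, map_sum, Finset.mul_sum]
  refine Finset.sum_congr rfl fun α hα => ?_
  rw [aeval_monomial, aeval_monomial, Finsupp.prod, Finsupp.prod]
  have h1 : ∏ i ∈ α.support, u i ^ α i
      = z ^ b * ∏ i ∈ α.support, u' i ^ α i := by
    calc ∏ i ∈ α.support, u i ^ α i = ∏ i ∈ α.support, (u' i * z) ^ α i :=
          Finset.prod_congr rfl fun i hi => by rw [hu α hα i hi]
      _ = (∏ i ∈ α.support, u' i ^ α i) * ∏ i ∈ α.support, z ^ α i := by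
          simp_rw [mul_pow]; rw [Finset.prod_mul_distrib]
      _ = (∏ i ∈ α.support, u' i ^ α i) * z ^ (α.sum fun _ e => e) := by
          rw [Finset.prod_pow_eq_pow_sum]; rfl
      _ = z ^ b * ∏ i ∈ α.support, u' i ^ α i := by rw [hdeg α hα, mul_comm]
  rw [h1, mul_left_comm]

theorem eval_aeval' (y : Fin n → K) (d : Fin n → MvPolynomial (Fin n) K)
    (f : MvPolynomial (Fin n) K) :
    MvPolynomial.eval y (MvPolynomial.aeval d f)
      = MvPolynomial.eval (fun i => MvPolynomial.eval y (d i)) f := by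
  induction f using MvPolynomial.induction_on with
  | C a => simp only [MvPolynomial.aeval_C, MvPolynomial.algebraMap_eq, MvPolynomial.eval_C]
  | add p q hp hq => simp only [map_add, hp, hq]
  | mul_X p i hp => simp only [map_mul, MvPolynomial.aeval_X, MvPolynomial.eval_X, hp]

theorem polyeval_aeval (r : MvPolynomial (Fin n) K)
    (d : Fin n → Polynomial (MvPolynomial (Fin n) K)) (f : MvPolynomial (Fin n) K) :
    Polynomial.eval r (MvPolynomial.aeval d f)
      = MvPolynomial.aeval (fun i => Polynomial.eval r (d i)) f := by
  induction f using MvPolynomial.induction_on with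
  | C a => simp only [MvPolynomial.aeval_C, Polynomial.algebraMap_apply,
      Polynomial.eval_C, MvPolynomial.algebraMap_eq]
  | add p q hp hq => simp only [map_add, Polynomial.eval_add, hp, hq]
  | mul_X p i hp => simp only [map_mul, MvPolynomial.aeval_X, Polynomial.eval_mul, hp]

theorem eval_smul_homog {F : MvPolynomial (Fin n) K} {b : ℕ} (hF : F.IsHomogeneous b)
    (c : K) (y : Fin n → K) :
    MvPolynomial.eval (c • y) F = c ^ b * MvPolynomial.eval y F := by
  conv_lhs => rw [MvPolynomial.as_sum F]
  conv_rhs => rw [MvPolynomial.as_sum F]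
  rw [map_sum, map_sum, Finset.mul_sum]
  refine Finset.sum_congr rfl fun α hα => ?_
  rw [eval_monomial, eval_monomial, Finsupp.prod, Finsupp.prod]
  have hb : (α.sum fun _ e => e) = b := by
    have h := hF (MvPolynomial.mem_support_iff.1 hα)
    rw [← h]
    simp [Finsupp.weight_apply, Finsupp.sum, mul_comm]
  calc (MvPolynomial.coeff α F) * ∏ i ∈ α.support, (c • y) i ^ α i
      = (MvPolynomial.coeff α F) * ((∏ i ∈ α.support, y i ^ α i)
          * ∏ i ∈ α.support, c ^ α i) := by
        simp_rw [Pi.smul_apply, smul_eq_mul, mul_pow]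
        rw [Finset.prod_mul_distrib, mul_comm (∏ i ∈ α.support, c ^ α i)]
    _ = c ^ b * ((MvPolynomial.coeff α F) * ∏ i ∈ α.support, y i ^ α i) := by
        rw [Finset.prod_pow_eq_pow_sum]
        have h2 : ∑ i ∈ α.support, α i = b := hb
        rw [h2]; ring

theorem totalDegree_aeval_le (u : Fin n → MvPolynomial (Fin n) K)
    (hu : ∀ i, (u i).totalDegree ≤ 1) (f : MvPolynomial (Fin n) K) :
    (MvPolynomial.aeval u f).totalDegree ≤ f.totalDegree := by
  conv_lhs => rw [MvPolynomial.as_sum f]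
  rw [map_sum]
  refine le_trans (MvPolynomial.totalDegree_finset_sum _ _) (Finset.sup_le fun α hα => ?_)
  rw [aeval_monomial]
  refine le_trans (MvPolynomial.totalDegree_mul _ _) ?_
  have h1 : (algebraMap K (MvPolynomial (Fin n) K) (MvPolynomial.coeff α f)).totalDegree = 0 := by
    rw [MvPolynomial.algebraMap_eq, MvPolynomial.totalDegree_C]
  rw [h1, zero_add, Finsupp.prod]
  refine le_trans (MvPolynomial.totalDegree_finset_prod _ _) ?_
  calc ∑ i ∈ α.support, (u i ^ α i).totalDegree
      ≤ ∑ i ∈ α.support, α i :=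
        Finset.sum_le_sum fun i _ => le_trans (MvPolynomial.totalDegree_pow _ _)
          (le_trans (Nat.mul_le_mul_left (α i) (hu i)) (le_of_eq (mul_one _)))
    _ ≤ f.totalDegree := by
        have h := MvPolynomial.le_totalDegree hα
        simpa [Finsupp.sum] using h

theorem aeval_mem_vanishing_pow (d : Fin n → MvPolynomial (Fin n) K) (p p' : Fin n → K)
    (h : ∀ i, MvPolynomial.eval p' (d i) = p i) {j : ℕ} {f : MvPolynomial (Fin n) K}
    (hf : f ∈ _root_.vanishingIdeal p ^ j) :
    MvPolynomial.aeval d f ∈ _root_.vanishingIdeal p' ^ j := by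
  have h1 : Ideal.map (MvPolynomial.aeval d :
        MvPolynomial (Fin n) K →ₐ[K] MvPolynomial (Fin n) K)
      (_root_.vanishingIdeal p) ≤ _root_.vanishingIdeal p' := by
    rw [Ideal.map_le_iff_le_comap]
    intro g hg
    rw [Ideal.mem_comap]
    show MvPolynomial.aeval d g ∈ _root_.vanishingIdeal p'
    rw [_root_.vanishingIdeal, RingHom.mem_ker]
    show MvPolynomial.eval p' (MvPolynomial.aeval d g) = 0
    rw [eval_aeval']
    have heq : (fun i => MvPolynomial.eval p' (d i)) = p := funext h
    rw [heq]
    rw [_root_.vanishingIdeal, RingHom.mem_ker] at hg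
    exact hg
  have h2 := Ideal.mem_map_of_mem
    (MvPolynomial.aeval d : MvPolynomial (Fin n) K →ₐ[K] MvPolynomial (Fin n) K) hf
  rw [Ideal.map_pow] at h2
  exact Ideal.pow_right_mono h1 j h2

end Stmt13

/-- Let `g ∈ ⟨x₁,…,x_m⟩^b` have order exactly `b` at the origin
(`g ∈ m₀^b`, `g ∉ m₀^{b+1}`), and let `g'` be its controlled transform in chart `k`,
i.e. `x_k^b·g' = φ_k(g)`.  Then at every point `q` of the exceptional divisor lying
over the origin (`q_k = 0` and `q_j = 0` for all `j > m`) one has `ord_q(g') ≤ b`,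
i.e. `g' ∉ m_q^{b+1}`: the maxorder does not increase under blowup. -/
theorem stmt_13 {K : Type*} [Field K] [CharZero K] {n : ℕ} (m : ℕ) (k : Fin n)
    (b : ℕ) (hm : m ≤ n) (hk : k.val < m) (hb : 1 ≤ b)
    (g g' : MvPolynomial (Fin n) K)
    (hgc : g ∈ centerIdeal K n m ^ b)
    (hord : g ∈ vanishingIdeal (0 : Fin n → K) ^ b)
    (hord' : g ∉ vanishingIdeal (0 : Fin n → K) ^ (b + 1))
    (hg' : (MvPolynomial.X k : MvPolynomial (Fin n) K) ^ b * g' = blowupChart m k g)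
    (q : Fin n → K) (hqk : q k = 0) (hqj : ∀ j : Fin n, m ≤ j.val → q j = 0) :
    g' ∉ vanishingIdeal q ^ (b + 1) := by
  classical
  open MvPolynomial Stmt13 in
  intro hmem
  -- notation for the various substitutions
  set U : Fin n → MvPolynomial (Fin n) K := fun i =>
    if i = k then X k else if i.val < m then (X i + C (q i)) * X k else X i with hU
  set U' : Fin n → MvPolynomial (Fin n) K := fun i =>
    if i = k then 1 else X i + C (q i) with hU'
  set D : Fin n → MvPolynomial (Fin n) K := fun i =>
    if i = k then 1 else X i with hD
  set W : Fin n → MvPolynomial (Fin n) K := fun i =>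
    if i.val < m ∧ i ≠ k then X i else 0 with hW
  set T : Fin n → MvPolynomial (Fin n) K := fun i => X i + C (q i) with hT
  set Th : Fin n → Polynomial (MvPolynomial (Fin n) K) := fun i =>
    if i.val < m ∧ i ≠ k then Polynomial.C (X i)
    else Polynomial.C (X i) * Polynomial.X with hTh
  set F : MvPolynomial (Fin n) K := homogeneousComponent b g with hF
  set g'' : MvPolynomial (Fin n) K := MvPolynomial.aeval T g' with hg''
  -- support facts for g
  have hgdeg : ∀ α ∈ g.support, b ≤ α.sum fun _ e => e := by
    intro α hα
    have h := (pow_le_sIdeal vanishing_zero_le b hord) α hα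
    simpa using h
  have hgwc : ∀ α ∈ g.support, b ≤ α.sum fun i e => (if i.val < m then 1 else 0) * e :=
    fun α hα => (pow_le_sIdeal centerIdeal_le b hgc) α hα
  -- facts about F
  have hFsupp : ∀ α ∈ F.support, α ∈ g.support ∧ (α.sum fun _ e => e) = b := by
    intro α hα
    have h := MvPolynomial.mem_support_iff.1 hα
    rw [hF, coeff_homogeneousComponent] at h
    by_cases hd : Finsupp.degree α = b
    · exact ⟨MvPolynomial.mem_support_iff.2 (by rwa [if_pos hd] at h), hd⟩
    · rw [if_neg hd] at h; exact absurd rfl h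
  have hFne : F ≠ 0 := by
    intro h0
    apply hord'
    apply mem_vanishing_pow
    intro α hα
    have h1 := hgdeg α hα
    rcases eq_or_lt_of_le h1 with heq | hlt
    · exfalso
      have h2 : MvPolynomial.coeff α F = MvPolynomial.coeff α g := by
        rw [hF, coeff_homogeneousComponent,
          if_pos (show Finsupp.degree α = b from heq.symm)]
      rw [h0, MvPolynomial.coeff_zero] at h2
      exact MvPolynomial.mem_support_iff.1 hα h2.symm
    · omega
  have hFm : ∀ α ∈ F.support, ∀ i ∈ α.support, i.val < m := by
    intro α hα i hi
    by_contra him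
    obtain ⟨hαg, hαb⟩ := hFsupp α hα
    have hc : b ≤ ∑ j ∈ α.support, (if j.val < m then 1 else 0) * α j := hgwc α hαg
    have hαb' : ∑ j ∈ α.support, α j = b := hαb
    have h2 : ∑ j ∈ α.support.erase i, α j + α i = ∑ j ∈ α.support, α j :=
      Finset.sum_erase_add α.support _ hi
    have h3 : ∑ j ∈ α.support, (if j.val < m then 1 else 0) * α j
        ≤ ∑ j ∈ α.support.erase i, α j := by
      rw [← Finset.sum_erase_add α.support _ hi, if_neg him, zero_mul, add_zero]
      exact Finset.sum_le_sum fun j _ => by split_ifs <;> omega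
    have h4 : 1 ≤ α i := by
      have := Finsupp.mem_support_iff.1 hi
      omega
    omega
  -- the chart equation after translation
  have hτφ : (MvPolynomial.aeval T).comp (blowupChart m k) =
      (MvPolynomial.aeval U : MvPolynomial (Fin n) K →ₐ[K] MvPolynomial (Fin n) K) := by
    apply MvPolynomial.algHom_ext
    intro i
    rw [AlgHom.comp_apply]
    rw [show blowupChart (K := K) m k (X i)
        = if i.val < m ∧ i ≠ k then X k * X i else X i from aeval_X _ i]
    by_cases hik : i = k
    · subst hik
      rw [if_neg (by simp), hU, hT]
      simp [hqk]
    · by_cases him : i.val < m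
      · rw [if_pos ⟨him, hik⟩, hU, hT]
        simp only [map_mul, map_add, aeval_X, aeval_C, MvPolynomial.algebraMap_eq,
          if_neg hik, if_pos him]
        rw [hqk, MvPolynomial.C_0]
        ring
      · rw [if_neg (by tauto), hU, hT]
        simp only [aeval_X, if_neg hik, if_neg him]
        rw [hqj i (le_of_not_gt him)]
        simp
  have key1 : MvPolynomial.aeval U g = X k ^ b * g'' := by
    calc MvPolynomial.aeval U g = (MvPolynomial.aeval T) (blowupChart m k g) := by
          rw [← hτφ]; rfl
      _ = (MvPolynomial.aeval T) (X k ^ b * g') := by rw [hg']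
      _ = ((MvPolynomial.aeval T) (X k)) ^ b * g'' := by rw [map_mul, map_pow, hg'']
      _ = X k ^ b * g'' := by
          rw [hT]; simp [hqk]
  have key2 : MvPolynomial.aeval U F = X k ^ b * MvPolynomial.aeval U' F := by
    refine aeval_factor U U' (X k) b F ?_ (fun α hα => (hFsupp α hα).2)
    intro α hα i hi
    have him := hFm α hα i hi
    by_cases hik : i = k
    · subst hik; rw [hU, hU']; simp
    · rw [hU, hU']
      simp [hik, him]
  have key3 : (MvPolynomial.aeval (fun i => Polynomial.C (U i) * Polynomial.X) g).coeff b
      = MvPolynomial.aeval U F := by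
    rw [coeff_aeval_C_mul_X, hF]
  have hθU : (MvPolynomial.aeval Th).comp (MvPolynomial.aeval U) =
      (MvPolynomial.aeval (fun i => Polynomial.C (U i) * Polynomial.X) :
        MvPolynomial (Fin n) K →ₐ[K] Polynomial (MvPolynomial (Fin n) K)) := by
    apply MvPolynomial.algHom_ext
    intro i
    rw [AlgHom.comp_apply, aeval_X, aeval_X]
    by_cases hik : i = k
    · subst hik
      rw [hU, hTh]
      simp
    · by_cases him : i.val < m
      · rw [hU, hTh]
        simp only [if_neg hik, if_pos him, map_mul, map_add, aeval_X, aeval_C,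
          MvPolynomial.algebraMap_eq, if_pos (⟨him, hik⟩ : i.val < m ∧ i ≠ k),
          Polynomial.algebraMap_apply, map_mul, map_add]
        rw [if_neg (show ¬((k : Fin n).val < m ∧ k ≠ k) by simp)]
        ring
      · rw [hU, hTh]
        have : ¬(i.val < m ∧ i ≠ k) := by tauto
        simp only [if_neg hik, if_neg him, aeval_X, if_neg this]
  have key4 : MvPolynomial.aeval (fun i => Polynomial.C (U i) * Polynomial.X) g
      = MvPolynomial.aeval Th (MvPolynomial.aeval U g) := by
    rw [← hθU]; rfl
  have hθX : MvPolynomial.aeval Th (X k : MvPolynomial (Fin n) K)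
      = Polynomial.C (X k) * Polynomial.X := by
    rw [aeval_X, hTh]
    simp
  have key5 : (MvPolynomial.aeval Th ((X k : MvPolynomial (Fin n) K) ^ b * g'')).coeff b
      = X k ^ b * MvPolynomial.aeval W g'' := by
    rw [map_mul, map_pow, hθX, mul_pow, ← Polynomial.C_pow, mul_assoc,
      Polynomial.coeff_C_mul]
    have h6 := Polynomial.coeff_X_pow_mul (MvPolynomial.aeval Th g'') b 0
    rw [zero_add] at h6
    rw [h6, Polynomial.coeff_zero_eq_eval_zero, polyeval_aeval]
    have hfun : (fun i => Polynomial.eval (0 : MvPolynomial (Fin n) K) (Th i)) = W := by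
      funext i
      rw [hTh, hW]
      by_cases h7 : i.val < m ∧ i ≠ k
      · simp [h7]
      · simp [h7]
    rw [hfun]
  have key6 : MvPolynomial.aeval U' F = MvPolynomial.aeval W g'' := by
    have e1 : (X k : MvPolynomial (Fin n) K) ^ b * MvPolynomial.aeval U' F
        = X k ^ b * MvPolynomial.aeval W g'' := by
      rw [← key2, ← key3, key4, key1, key5]
    exact mul_left_cancel₀ (pow_ne_zero b (MvPolynomial.X_ne_zero k)) e1
  -- membership facts
  have hg''mem : g'' ∈ vanishingIdeal (0 : Fin n → K) ^ (b + 1) := by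
    rw [hg'']
    refine aeval_mem_vanishing_pow T q 0 ?_ hmem
    intro i
    rw [hT]
    simp
  have hWmem : MvPolynomial.aeval W g'' ∈ vanishingIdeal (0 : Fin n → K) ^ (b + 1) := by
    refine aeval_mem_vanishing_pow W 0 0 ?_ hg''mem
    intro i
    rw [hW]
    by_cases h7 : i.val < m ∧ i ≠ k
    · simp [h7]
    · simp [h7]
  -- nonvanishing of the dehomogenized transform
  have hU'F : MvPolynomial.aeval U' F ≠ 0 := by
    intro h0
    have hcomp : (MvPolynomial.aeval T).comp (MvPolynomial.aeval D) =
        (MvPolynomial.aeval U' : MvPolynomial (Fin n) K →ₐ[K] MvPolynomial (Fin n) K) := by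
      apply MvPolynomial.algHom_ext
      intro i
      rw [AlgHom.comp_apply, aeval_X, aeval_X]
      by_cases hik : i = k
      · subst hik; rw [hD, hU']; simp
      · rw [hD, hU', hT]
        simp [hik]
    have h1 : (MvPolynomial.aeval T) (MvPolynomial.aeval D F) = 0 := by
      rw [show (MvPolynomial.aeval T) (MvPolynomial.aeval D F)
          = ((MvPolynomial.aeval T).comp (MvPolynomial.aeval D)) F from rfl, hcomp]
      exact h0
    have h2 : MvPolynomial.aeval D F = 0 := by
      have h3 : ∀ f : MvPolynomial (Fin n) K,
          MvPolynomial.aeval (fun i => X i - C (q i)) ((MvPolynomial.aeval T) f) = f := by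
        intro f
        have h4 : (MvPolynomial.aeval (fun i => X i - C (q i))).comp (MvPolynomial.aeval T) =
            (AlgHom.id K (MvPolynomial (Fin n) K)) := by
          apply MvPolynomial.algHom_ext
          intro i
          rw [AlgHom.comp_apply, aeval_X, hT, map_add, aeval_X, aeval_C,
            MvPolynomial.algebraMap_eq, AlgHom.id_apply]
          ring
        rw [show MvPolynomial.aeval (fun i => X i - C (q i)) ((MvPolynomial.aeval T) f)
            = ((MvPolynomial.aeval (fun i => X i - C (q i))).comp (MvPolynomial.aeval T)) f
            from rfl, h4, AlgHom.id_apply]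
      calc MvPolynomial.aeval D F
          = MvPolynomial.aeval (fun i => X i - C (q i))
              ((MvPolynomial.aeval T) (MvPolynomial.aeval D F)) := (h3 _).symm
        _ = 0 := by rw [h1, map_zero]
    have hFhom : F.IsHomogeneous b := by
      rw [hF]; exact homogeneousComponent_isHomogeneous b g
    have hFX : F * X k = 0 := by
      apply MvPolynomial.IsHomogeneous.eq_zero_of_forall_eval_eq_zero
        (hFhom.mul (isHomogeneous_X K k))
      intro x
      rw [map_mul, eval_X]
      by_cases hx : x k = 0
      · rw [hx, mul_zero]
      · have hy : x = (x k) • ((x k)⁻¹ • x) := by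
          rw [smul_smul, mul_inv_cancel₀ hx, one_smul]
        have h5 : MvPolynomial.eval x F
            = (x k) ^ b * MvPolynomial.eval ((x k)⁻¹ • x) F := by
          conv_lhs => rw [hy]
          exact eval_smul_homog hFhom _ _
        have h6 : MvPolynomial.eval ((x k)⁻¹ • x) F
            = MvPolynomial.eval ((x k)⁻¹ • x) (MvPolynomial.aeval D F) := by
          rw [eval_aeval']
          have hfun : (fun i => MvPolynomial.eval ((x k)⁻¹ • x) (D i)) = (x k)⁻¹ • x := by
            funext i
            rw [hD]
            by_cases hik : i = k
            · subst hik
              simp [Pi.smul_apply, smul_eq_mul, inv_mul_cancel₀ hx]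
            · simp [hik]
          rw [hfun]
        rw [h5, h6, h2, map_zero, mul_zero, zero_mul]
    rcases mul_eq_zero.1 hFX with h | h
    · exact hFne h
    · exact MvPolynomial.X_ne_zero k h
  -- final contradiction
  obtain ⟨α, hα⟩ := MvPolynomial.support_nonempty.2 hU'F
  have h5 : b + 1 ≤ α.sum fun _ e => e := by
    have h6 : MvPolynomial.aeval U' F ∈ vanishingIdeal (0 : Fin n → K) ^ (b + 1) := by
      rw [key6]; exact hWmem
    have h7 := (pow_le_sIdeal vanishing_zero_le (b + 1) h6) α hα
    simpa using h7
  have h8 : (α.sum fun _ e => e) ≤ b := by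
    have h9 := MvPolynomial.le_totalDegree hα
    have h10 : (MvPolynomial.aeval U' F).totalDegree ≤ F.totalDegree := by
      refine totalDegree_aeval_le U' ?_ F
      intro i
      simp only [hU']
      by_cases hik : i = k
      · subst hik; simp
      · rw [if_neg hik]
        refine le_trans (MvPolynomial.totalDegree_add _ _) ?_
        simp [MvPolynomial.totalDegree_X, MvPolynomial.totalDegree_C]
    have h11 : F.totalDegree ≤ b := by
      rw [hF]
      exact (homogeneousComponent_isHomogeneous b g).totalDegree_le
    omega
  omega
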